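/- Let G be a graph on vertex set {1,…,n} with edge set S. Then G admits an acyclic orientation with no alternating closed trail if and only if there exists a permutation σ of {1,…,n} such that the edges {(min(σ(i),σ(j)), max(σ(i),σ(j))) : {i,j} ∈ S}, viewed as edges of the bipartite graph H_n with partite sets A = {1,…,n−1} and B = {2,…,n} (where a ∈ A is joined to b ∈ B iff a < b, with the edge {i,j}, i<j, sent to the pair (i ∈ A, j ∈ B)), form an acyclic subgraph (contain no cycle) of H_n. -/

import Mathlib

/-- `D` is an orientation of the (undirected, symmetric) edge relation `E`:
every directed edge is an edge of the graph, every edge gets some direction,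
and no edge gets both directions. -/
def IsOrientation {V : Type*} (E D : V → V → Prop) : Prop :=
  (∀ a b, D a b → E a b) ∧ (∀ a b, E a b → (D a b ∨ D b a)) ∧
    (∀ a b, ¬ (D a b ∧ D b a))

/-- The directed graph `D` contains a directed cycle. -/
def HasDirectedCycle {V : Type*} (D : V → V → Prop) : Prop :=
  ∃ m : ℕ, 0 < m ∧ ∃ c : ZMod m → V, ∀ i, D (c i) (c (i + 1))

/-- The directed graph `D` contains an alternating closed trail: a closed trail
`top 0, bot 0, top 1, bot 1, …, top (k-1), bot (k-1)` in which consecutive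
edges have opposite orientations (each `bot j` is the head of both of its trail
edges, each `top j` is the tail of both of its trail edges), and all (unordered)
edges of the trail are distinct. -/
def HasAltClosedTrail {V : Type*} (D : V → V → Prop) : Prop :=
  ∃ k : ℕ, 0 < k ∧ ∃ top bot : ZMod k → V,
    (∀ j, D (top j) (bot j)) ∧ (∀ j, D (top (j + 1)) (bot j)) ∧
    (∀ (j j' : ZMod k) (s s' : Bool),
      (if s then top (j + 1) else top j) = (if s' then top (j' + 1) else top j') →
      bot j = bot j' → (j, s) = (j', s'))

/-- a graph `E` on `{1,…,n}` admits an acyclic orientation with no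
alternating closed trail iff some relabeling `σ` of the vertices sends its edge
set to an acyclic (cycle-free) subgraph of the bipartite graph `Hₙ` with parts
`A = {1,…,n−1}`, `B = {2,…,n}` and edges `(a,b)` for `a < b`; the edge `{i,j}`
is sent to the `Hₙ`-edge `(min(σi,σj), max(σi,σj))`.  A cycle in `Hₙ` is a
closed alternating sequence `b 0, a 0, b 1, a 1, …` of ≥ 2 distinct `A`-vertices
and ≥ 2 distinct `B`-vertices in which consecutive vertices are joined by edges
of the subgraph. -/

lemma transGen_of_cycle {V : Type*} {D : V → V → Prop} (h : HasDirectedCycle D) :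
    ∃ x, Relation.TransGen D x x := by
  obtain ⟨m, hm, c, hc⟩ := h
  have key : ∀ i : ℕ, Relation.TransGen D (c 0) (c (i + 1 : ℕ)) := by
    intro i
    induction i with
    | zero => simpa using Relation.TransGen.single (hc 0)
    | succ i ih =>
      refine ih.tail ?_
      have := hc ((i:ZMod m) + 1)
      convert this using 2 <;> push_cast <;> ring
  refine ⟨c 0, ?_⟩
  have := key (m - 1)
  rwa [show ((m - 1 + 1 : ℕ) : ZMod m) = 0 by
    rw [Nat.sub_add_cancel hm]; exact ZMod.natCast_self m] at this

lemma transGen_chain {V : Type*} {D : V → V → Prop} {x y : V} (h : Relation.TransGen D x y) :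
    ∃ l : List V, l ≠ [] ∧ List.Chain' D (x :: l) ∧ (x :: l).getLast? = some y := by
  induction h with
  | @single b hxy => exact ⟨[b], by simp, List.isChain_pair.2 hxy, by simp⟩
  | @tail b c hxb hbc ih =>
    obtain ⟨l, hne, hch, hlast⟩ := ih
    have hxc : x :: (l ++ [c]) = (x :: l) ++ [c] := by simp
    refine ⟨l ++ [c], by simp, ?_, by rw [hxc]; exact List.getLast?_concat⟩
    have : x :: (l ++ [c]) = (x :: l) ++ [c] := hxc
    rw [this]
    refine List.IsChain.append hch (by simp) ?_
    intro u hu v hv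
    rw [Option.mem_def, hlast] at hu
    rw [Option.mem_def] at hv
    injection hu with hu
    injection hv with hv
    subst hu; subst hv; exact hbc

lemma cycle_of_transGen {V : Type*} {D : V → V → Prop} {x : V}
    (h : Relation.TransGen D x x) : HasDirectedCycle D := by
  obtain ⟨l, hne, hch, hlast⟩ := transGen_chain h
  set L := x :: l with hL
  have hm : 0 < l.length := List.length_pos_iff.2 hne
  have hlen : L.length = l.length + 1 := by simp [hL]
  haveI : NeZero l.length := ⟨hm.ne'⟩
  have hvlt : ∀ i : ZMod l.length, (i.val) < L.length := by
    intro i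
    have := ZMod.val_lt (n := l.length) i
    omega
  have hgeq : ∀ (p q : ℕ) (hp : p < L.length) (hq : q < L.length), p = q →
      L.get ⟨p, hp⟩ = L.get ⟨q, hq⟩ := by rintro p q hp hq rfl; rfl
  refine ⟨l.length, hm, fun i => L.get ⟨i.val, hvlt i⟩, ?_⟩
  intro i
  dsimp only
  have hget := List.isChain_iff_getElem.1 hch
  have hval : (i + 1).val = (i.val + 1) % l.length := by
    rw [ZMod.val_add, ZMod.val_one_eq_one_mod, Nat.add_mod_mod]
  by_cases hcase : i.val + 1 < l.length
  · have h1 : (i + 1).val = i.val + 1 := by rw [hval, Nat.mod_eq_of_lt hcase]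
    have this := hget i.val (by omega)
    have e2 : (⟨(i+1).val, hvlt _⟩ : Fin L.length) = ⟨i.val + 1, by omega⟩ := by
      ext; simp [h1]
    rw [e2]
    exact this
  · have hiv : i.val = l.length - 1 := by have := ZMod.val_lt (n := l.length) i; omega
    have h0 : (i + 1).val = 0 := by rw [hval, hiv, Nat.sub_add_cancel hm, Nat.mod_self]
    have hD := hget (l.length - 1) (by omega)
    have h1 : L.getLast (by simp [hL]) = x := by
      rw [List.getLast?_eq_getLast (by simp [hL])] at hlast
      exact Option.some_injective _ hlast
    have hlastget : L.get ⟨l.length - 1 + 1, by omega⟩ = x := by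
      rw [← h1, ← List.get_length_sub_one (by omega)]
      exact hgeq _ _ _ _ (by omega)
    have e1 : (⟨i.val, hvlt i⟩ : Fin L.length) = ⟨l.length - 1, by omega⟩ := by
      ext; simp [hiv]
    have e2 : (⟨(i+1).val, hvlt _⟩ : Fin L.length) = ⟨0, by omega⟩ := by
      ext; simp [h0]
    have hx : L.get ⟨0, by omega⟩ = x := rfl
    rw [e1, e2, hx, ← hlastget]
    exact hD


lemma walk_split {V : Type*} {P : V → V → Prop} {k : ℕ} (hk : 0 < k)
    (a b : ZMod k → V)
    (h1 : ∀ j, P (a j) (b j)) (h2 : ∀ j, P (a (j+1)) (b j))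
    (hdist : ∀ (j j' : ZMod k) (s s' : Bool),
      (if s then a (j + 1) else a j) = (if s' then a (j' + 1) else a j') →
      b j = b j' → (j, s) = (j', s'))
    {j₁ j₂ : ZMod k} (hne : j₁ ≠ j₂) (heq : a j₁ = a j₂) :
    ∃ m, 0 < m ∧ m < k ∧ ∃ (a' b' : ZMod m → V),
      (∀ j, P (a' j) (b' j)) ∧ (∀ j, P (a' (j+1)) (b' j)) ∧
      (∀ (j j' : ZMod m) (s s' : Bool),
        (if s then a' (j + 1) else a' j) = (if s' then a' (j' + 1) else a' j') →
        b' j = b' j' → (j, s) = (j', s')) := by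
  haveI : NeZero k := ⟨hk.ne'⟩
  set d := j₂ - j₁ with hd
  have hd0 : d ≠ 0 := sub_ne_zero.2 (Ne.symm hne)
  set m := d.val with hm
  have hm0 : 0 < m := by
    rcases Nat.eq_zero_or_pos m with h | h
    · exact absurd ((ZMod.val_eq_zero d).1 h) hd0
    · exact h
  have hmk : m < k := ZMod.val_lt d
  haveI : NeZero m := ⟨hm0.ne'⟩
  set ι : ZMod m → ZMod k := fun j => j₁ + ((j.val : ℕ) : ZMod k) with hι
  have ιinj : Function.Injective ι := by
    intro u v huv
    have : ((u.val : ℕ) : ZMod k) = ((v.val : ℕ) : ZMod k) := by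
      simpa [hι] using huv
    have hu := ZMod.val_lt (n := m) u
    have hv := ZMod.val_lt (n := m) v
    have : u.val = v.val := by
      have := congrArg ZMod.val this
      rwa [ZMod.val_cast_of_lt (by omega), ZMod.val_cast_of_lt (by omega)] at this
    exact ZMod.val_injective _ this
  have key : ∀ j : ZMod m, (fun j => a (ι j)) (j + 1) = a (ι j + 1) := by
    intro j
    dsimp only
    have hval : (j + 1).val = (j.val + 1) % m := by
      rw [ZMod.val_add, ZMod.val_one_eq_one_mod, Nat.add_mod_mod]
    have hjv := ZMod.val_lt (n := m) j
    by_cases hc : j.val + 1 < m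
    · have h1' : (j + 1).val = j.val + 1 := by rw [hval, Nat.mod_eq_of_lt hc]
      have : ι (j + 1) = ι j + 1 := by
        simp only [hι, h1']
        push_cast
        ring
      rw [this]
    · have hjm : j.val + 1 = m := by omega
      have h0 : (j + 1).val = 0 := by rw [hval, hjm, Nat.mod_self]
      have e1 : ι (j + 1) = j₁ := by
        show j₁ + (((j+1).val : ℕ) : ZMod k) = j₁
        rw [h0]; simp
      have e2 : ι j + 1 = j₂ := by
        show j₁ + ((j.val : ℕ) : ZMod k) + 1 = j₂
        have c1 : ((j.val : ℕ) : ZMod k) + 1 = ((j.val + 1 : ℕ) : ZMod k) := by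
          push_cast; ring
        have c2 : ((j.val + 1 : ℕ) : ZMod k) = ((m : ℕ) : ZMod k) := by rw [hjm]
        have hmd : ((m : ℕ) : ZMod k) = d := ZMod.natCast_rightInverse d
        rw [add_assoc, c1, c2, hmd, hd]
        ring
      rw [e1, e2, heq]
  refine ⟨m, hm0, hmk, fun j => a (ι j), fun j => b (ι j), fun j => h1 (ι j), ?_, ?_⟩
  · intro j
    rw [key j]
    exact h2 (ι j)
  · intro j j' s s' hA hB
    have hA' : (if s then a (ι j + 1) else a (ι j)) = (if s' then a (ι j' + 1) else a (ι j')) := by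
      cases s <;> cases s' <;> simpa [key] using hA
    have := hdist (ι j) (ι j') s s' hA' hB
    rw [Prod.mk.injEq] at this ⊢
    exact ⟨ιinj this.1, this.2⟩

lemma walk_extract {V : Type*} : ∀ (k : ℕ) (P : V → V → Prop) (a b : ZMod k → V),
    0 < k →
    (∀ j, P (a j) (b j)) → (∀ j, P (a (j+1)) (b j)) →
    (∀ (j j' : ZMod k) (s s' : Bool),
      (if s then a (j + 1) else a j) = (if s' then a (j' + 1) else a j') →
      b j = b j' → (j, s) = (j', s')) →
    ∃ k' : ℕ, 2 ≤ k' ∧ ∃ (a' : ZMod k' → V) (b' : ZMod k' → V),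
      Function.Injective a' ∧ Function.Injective b' ∧
      (∀ j, P (a' j) (b' j)) ∧ (∀ j, P (a' (j+1)) (b' j)) := by
  intro k
  induction k using Nat.strong_induction_on with
  | _ k IH =>
  intro P a b hk h1 h2 hdist
  by_cases ha : Function.Injective a
  · by_cases hb : Function.Injective b
    · -- the walk itself is a cycle; just need k ≥ 2
      have hk2 : 2 ≤ k := by
        rcases k with _ | _ | k
        · omega
        · exfalso
          have h01 : (0 : ZMod 1) + 1 = 0 := Subsingleton.elim _ _
          have := hdist 0 0 false true (by simp [h01]) rfl
          simp at this
        · omega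
      exact ⟨k, hk2, a, b, ha, hb, h1, h2⟩
    · -- b repeats: dualize, split, recurse, dualize back
      rw [Function.not_injective_iff] at hb
      obtain ⟨j₁, j₂, hbeq, hne⟩ := hb
      set Q : V → V → Prop := fun x y => P y x with hQ
      set A : ZMod k → V := fun j => b (-j) with hA
      set B : ZMod k → V := fun j => a (-j) with hB
      have hQ1 : ∀ j, Q (A j) (B j) := fun j => h1 (-j)
      have hQ2 : ∀ j, Q (A (j+1)) (B j) := by
        intro j
        have := h2 (-(j+1))
        have e : -(j+1) + 1 = -j := by ring
        rw [e] at this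
        show P (a (-j)) (b (-(j+1)))
        exact this
      have hQdist : ∀ (j j' : ZMod k) (s s' : Bool),
          (if s then A (j + 1) else A j) = (if s' then A (j' + 1) else A j') →
          B j = B j' → (j, s) = (j', s') := by
        intro j j' s s' hA' hB'
        set J : ZMod k := if s then -(j+1) else -j with hJ
        set J' : ZMod k := if s' then -(j'+1) else -j' with hJ'
        have hbJ : b J = b J' := by
          cases s <;> cases s' <;> simpa [hJ, hJ', hA] using hA'
        have haJ : (if s then a (J + 1) else a J) = (if s' then a (J' + 1) else a J') := by
          have l1 : (if s then a (J + 1) else a J) = a (-j) := by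
            cases s <;> simp [hJ] <;> ring_nf
          have l2 : (if s' then a (J' + 1) else a J') = a (-j') := by
            cases s' <;> simp [hJ'] <;> ring_nf
          rw [l1, l2]
          simpa [hB] using hB'
        have := hdist J J' s s' haJ hbJ
        rw [Prod.mk.injEq] at this ⊢
        obtain ⟨hJJ, hss⟩ := this
        refine ⟨?_, hss⟩
        subst hss
        cases s <;>
          · simp only [hJ, hJ', if_true, if_false] at hJJ
            have := neg_injective hJJ
            first
            | exact add_right_cancel this
            | exact this
      have hArep : A (-j₁) = A (-j₂) := by simp [hA, hbeq]
      have hAne : (-j₁ : ZMod k) ≠ -j₂ := fun h => hne (neg_injective h)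
      obtain ⟨m, hm0, hmk, A', B', g1, g2, gdist⟩ :=
        walk_split hk A B hQ1 hQ2 hQdist hAne hArep
      obtain ⟨k', hk2, A'', B'', injA, injB, f1, f2⟩ :=
        IH m hmk Q A' B' hm0 g1 g2 gdist
      refine ⟨k', hk2, fun j => B'' (-j), fun j => A'' (-j), ?_, ?_, ?_, ?_⟩
      · exact fun u v huv => neg_injective (injB huv)
      · exact fun u v huv => neg_injective (injA huv)
      · exact fun j => f1 (-j)
      · intro j
        have := f2 (-(j+1))
        have e : -(j+1) + 1 = -j := by ring
        rw [e] at this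
        exact this
  · rw [Function.not_injective_iff] at ha
    obtain ⟨j₁, j₂, haeq, hne⟩ := ha
    obtain ⟨m, hm0, hmk, a', b', g1, g2, gdist⟩ :=
      walk_split hk a b h1 h2 hdist hne haeq
    exact IH m hmk P a' b' hm0 g1 g2 gdist

lemma topo_perm {n : ℕ} {D : Fin n → Fin n → Prop} (hnc : ¬ HasDirectedCycle D) :
    ∃ σ : Equiv.Perm (Fin n), ∀ x y, D x y → σ x < σ y := by
  classical
  have hirr : ∀ x, ¬ Relation.TransGen D x x := fun x h => hnc (cycle_of_transGen h)
  set r : Fin n → Fin n → Prop := fun x y => Relation.TransGen D x y ∨ x = y with hr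
  haveI : IsPartialOrder (Fin n) r :=
    { refl := fun x => Or.inr rfl
      trans := by
        rintro x y z (hxy | rfl) (hyz | rfl)
        · exact Or.inl (hxy.trans hyz)
        · exact Or.inl hxy
        · exact Or.inl hyz
        · exact Or.inr rfl
      antisymm := by
        rintro x y (hxy | rfl) (hyx | h)
        · exact absurd (hxy.trans hyx) (hirr x)
        · exact h.symm
        · rfl
        · rfl }
  obtain ⟨s, hs, hrs⟩ := extend_partialOrder r
  set t : Fin n → Fin n → Prop := fun x y => s x y ∧ x ≠ y with ht
  have ttrans : ∀ {x y z}, t x y → t y z → t x z := by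
    rintro x y z ⟨h1, h2⟩ ⟨h3, h4⟩
    refine ⟨hs.trans _ _ _ h1 h3, fun hxz => ?_⟩
    subst hxz
    exact h2 (hs.antisymm _ _ h1 h3)
  have ttot : ∀ x y, x ≠ y → t x y ∨ t y x := by
    intro x y hxy
    rcases hs.total x y with h | h
    · exact Or.inl ⟨h, hxy⟩
    · exact Or.inr ⟨h, hxy.symm⟩
  set g : Fin n → ℕ := fun x => (Finset.univ.filter (fun y => t y x)).card with hg
  have hmono : ∀ x y, t x y → g x < g y := by
    intro x y hxy
    apply Finset.card_lt_card
    constructor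
    · intro z hz
      simp only [Finset.mem_filter, Finset.mem_univ, true_and] at hz ⊢
      exact ttrans hz hxy
    · intro hsub
      have hx : x ∈ Finset.univ.filter (fun z => t z y) := by
        simp only [Finset.mem_filter, Finset.mem_univ, true_and]
        exact hxy
      have := hsub hx
      simp only [Finset.mem_filter, Finset.mem_univ, true_and] at this
      exact this.2 rfl
  have hDt : ∀ x y, D x y → t x y := by
    intro x y hD
    have hR : r x y := Or.inl (Relation.TransGen.single hD)
    refine ⟨hrs _ _ hR, fun hxy => ?_⟩
    subst hxy
    exact hirr x (Relation.TransGen.single hD)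
  have hglt : ∀ x, g x < n := by
    intro x
    have hsub : Finset.univ.filter (fun y => t y x) ⊆ Finset.univ.erase x := by
      intro z hz
      simp only [Finset.mem_filter, Finset.mem_univ, true_and] at hz
      simp [hz.2]
    calc g x ≤ (Finset.univ.erase x).card := Finset.card_le_card hsub
      _ < Finset.univ.card := Finset.card_erase_lt_of_mem (Finset.mem_univ x)
      _ = n := by simp
  set σ0 : Fin n → Fin n := fun x => ⟨g x, hglt x⟩ with hσ0
  have hinj : Function.Injective σ0 := by
    intro x y hxy
    by_contra hne
    rcases ttot x y hne with h | h
    · have := hmono x y h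
      have : g x = g y := congrArg Fin.val hxy
      omega
    · have := hmono y x h
      have : g x = g y := congrArg Fin.val hxy
      omega
  have hbij := (Finite.injective_iff_bijective).1 hinj
  refine ⟨Equiv.ofBijective σ0 hbij, ?_⟩
  intro x y hD
  show σ0 x < σ0 y
  exact hmono x y (hDt x y hD)

theorem stmt_3 (n : ℕ) (E : Fin n → Fin n → Prop)
    (hsym : ∀ a b, E a b → E b a) (hirr : ∀ a, ¬ E a a) :
    (∃ D, IsOrientation E D ∧ ¬ HasDirectedCycle D ∧ ¬ HasAltClosedTrail D) ↔
    ∃ σ : Equiv.Perm (Fin n),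
      ¬ ∃ k : ℕ, 2 ≤ k ∧ ∃ a b : ZMod k → Fin n,
        Function.Injective a ∧ Function.Injective b ∧
        ∀ j, (∃ i i', E i i' ∧ a j = min (σ i) (σ i') ∧ b j = max (σ i) (σ i')) ∧
          (∃ i i', E i i' ∧ a (j + 1) = min (σ i) (σ i') ∧ b j = max (σ i) (σ i')) := by
  constructor
  · rintro ⟨D, ⟨hDE, hED, hDD⟩, hnc, hnat⟩
    obtain ⟨σ, hσ⟩ := topo_perm hnc
    refine ⟨σ, ?_⟩
    rintro ⟨k, hk2, a, b, inja, injb, hcyc⟩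
    apply hnat
    have hedge : ∀ (x y : Fin n),
        (∃ i i', E i i' ∧ x = min (σ i) (σ i') ∧ y = max (σ i) (σ i')) →
        D (σ.symm x) (σ.symm y) := by
      rintro x y ⟨i, i', hE, hmin, hmax⟩
      have hne : i ≠ i' := fun h => hirr i (h ▸ hE)
      have hσne : σ i ≠ σ i' := fun h => hne (σ.injective h)
      rcases lt_or_gt_of_ne hσne with h | h
      · rw [min_eq_left h.le] at hmin
        rw [max_eq_right h.le] at hmax
        subst hmin; subst hmax
        simp only [Equiv.symm_apply_apply]
        rcases hED i i' hE with hD | hD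
        · exact hD
        · exact absurd (hσ _ _ hD) (lt_asymm h)
      · rw [min_eq_right h.le] at hmin
        rw [max_eq_left h.le] at hmax
        subst hmin; subst hmax
        simp only [Equiv.symm_apply_apply]
        rcases hED i i' hE with hD | hD
        · exact absurd (hσ _ _ hD) (lt_asymm h)
        · exact hD
    refine ⟨k, by omega, fun j => σ.symm (a j), fun j => σ.symm (b j), ?_, ?_, ?_⟩
    · exact fun j => hedge _ _ (hcyc j).1
    · exact fun j => hedge _ _ (hcyc j).2
    · intro j j' s s' hT hB
      have hbj : b j = b j' := σ.symm.injective hB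
      have hjj : j = j' := injb hbj
      subst hjj
      rw [Prod.mk.injEq]
      refine ⟨rfl, ?_⟩
      by_contra hss
      have hTa : (if s then a (j + 1) else a j) = (if s' then a (j + 1) else a j) := by
        have : σ.symm (if s then a (j + 1) else a j) =
            σ.symm (if s' then a (j + 1) else a j) := by
          cases s <;> cases s' <;> simpa using hT
        exact σ.symm.injective this
      have hj1 : j + 1 = j := by
        cases s <;> cases s'
        · exact absurd rfl hss
        · exact inja hTa.symm
        · exact inja hTa
        · exact absurd rfl hss
      have h10 : (1 : ZMod k) = 0 := by
        have := add_left_cancel (a := j) (b := (1 : ZMod k)) (c := 0) (by simpa using hj1)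
        exact this
      haveI : Fact (1 < k) := ⟨by omega⟩
      have := congrArg ZMod.val h10
      rw [ZMod.val_one, ZMod.val_zero] at this
      exact one_ne_zero this
  · rintro ⟨σ, hno⟩
    set D : Fin n → Fin n → Prop := fun i i' => E i i' ∧ σ i < σ i' with hD
    have mono : ∀ u v : Fin n, Relation.TransGen D u v → σ u < σ v := by
      intro u v h
      induction h with
      | single h => exact h.2
      | tail _ h ih => exact ih.trans h.2
    refine ⟨D, ⟨fun a b h => h.1, ?_, ?_⟩, ?_, ?_⟩
    · intro x y hE
      have hne : x ≠ y := fun h => hirr x (h ▸ hE)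
      have hσne : σ x ≠ σ y := fun h => hne (σ.injective h)
      rcases lt_or_gt_of_ne hσne with h | h
      · exact Or.inl ⟨hE, h⟩
      · exact Or.inr ⟨hsym _ _ hE, h⟩
    · rintro x y ⟨⟨_, h1⟩, ⟨_, h2⟩⟩
      exact lt_asymm h1 h2
    · intro h
      obtain ⟨x, hx⟩ := transGen_of_cycle h
      exact lt_irrefl _ (mono _ _ hx)
    · rintro ⟨k, hk, top, bot, ht1, ht2, htd⟩
      apply hno
      set P : Fin n → Fin n → Prop := fun x y =>
        ∃ i i', E i i' ∧ x = min (σ i) (σ i') ∧ y = max (σ i) (σ i') with hP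
      have w1 : ∀ j, P (σ (top j)) (σ (bot j)) := fun j =>
        ⟨top j, bot j, (ht1 j).1, (min_eq_left (ht1 j).2.le).symm,
          (max_eq_right (ht1 j).2.le).symm⟩
      have w2 : ∀ j, P (σ (top (j + 1))) (σ (bot j)) := fun j =>
        ⟨top (j + 1), bot j, (ht2 j).1, (min_eq_left (ht2 j).2.le).symm,
          (max_eq_right (ht2 j).2.le).symm⟩
      have wd : ∀ (j j' : ZMod k) (s s' : Bool),
          (if s then σ (top (j + 1)) else σ (top j)) =
            (if s' then σ (top (j' + 1)) else σ (top j')) →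
          σ (bot j) = σ (bot j') → (j, s) = (j', s') := by
        intro j j' s s' hT hB
        refine htd j j' s s' ?_ (σ.injective hB)
        apply σ.injective
        cases s <;> cases s' <;> simpa using hT
      obtain ⟨k', hk2, a', b', inja, injb, f1, f2⟩ :=
        walk_extract k P (fun j => σ (top j)) (fun j => σ (bot j)) hk w1 w2 wd
      exact ⟨k', hk2, a', b', inja, injb, fun j => ⟨f1 j, f2 j⟩⟩
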